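/- Let T be a tree with root z which is not a leaf, and let U ⊆ V(T) be a set such that: U is a vertex cover of T of minimum size; no vertex of U is a leaf of T; and a vertex v ∈ V(T) lies in U if and only if v has a child (with respect to z) not contained in U. Let (G_i)_{i≥0} be a T-bootstrap process, let i₀ ∈ ℕ, let T₀ ⊆ G_{i₀} be a copy of T and let φ : T → T₀ be an isomorphism. Then in G_{i₀ + ⌈height_z(T)/2⌉}, every vertex of φ(U) is adjacent to every vertex of V(G) \ V(T₀). -/

import Mathlib

open SimpleGraph

/-- The number of subgraphs of `G` isomorphic to `H`. -/
noncomputable def numCopies {α β : Type*} (H : SimpleGraph α) (G : SimpleGraph β) : ℕ :=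
  {G' : G.Subgraph | Nonempty (G'.coe ≃g H)}.ncard

/-- One step of the `H`-bootstrap process: add every missing edge whose addition
creates a new copy of `H`. -/
noncomputable def bootStep {α β : Type*} (H : SimpleGraph α) (G : SimpleGraph β) :
    SimpleGraph β :=
  G ⊔ SimpleGraph.fromRel (fun u v =>
    numCopies H G < numCopies H (G ⊔ SimpleGraph.fromEdgeSet {s(u, v)}))

/-- The `H`-bootstrap process `(G_i)_{i ≥ 0}` on the starting graph `G`. -/
noncomputable def bootProcess {α β : Type*} (H : SimpleGraph α) (G : SimpleGraph β) :
    ℕ → SimpleGraph β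
  | 0 => G
  | i + 1 => bootStep H (bootProcess H G i)

/-- The running time `τ_H(G)` of the `H`-bootstrap process on `G`. -/
noncomputable def runningTime {α β : Type*} (H : SimpleGraph α) (G : SimpleGraph β) : ℕ :=
  sInf {t | bootProcess H G t = bootProcess H G (t + 1)}

/-- `M_H(n)`, the maximum running time of the `H`-bootstrap process over all
`n`-vertex starting graphs. -/
noncomputable def maxRunningTime {α : Type*} (H : SimpleGraph α) (n : ℕ) : ℕ :=
  sSup {t | ∃ G : SimpleGraph (Fin n), runningTime H G = t}

/-- The height of the tree `T` with respect to the root `z`: for a tree this equals the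
largest distance from `z` to a vertex. -/
noncomputable def treeHeight {V : Type*} (T : SimpleGraph V) (z : V) : ℕ :=
  sSup {d : ℕ | ∃ v : V, T.dist z v = d}

lemma bootProcess_mono {α β : Type*} (H : SimpleGraph α) (G : SimpleGraph β) :
    Monotone (bootProcess H G) :=
  monotone_nat_of_le_succ fun i => (le_sup_left : _ ≤ bootStep H (bootProcess H G i))

lemma subgraph_finite {β : Type*} [Finite β] (G : SimpleGraph β) : Finite G.Subgraph :=
  Finite.of_injective (fun H => (H.verts, H.Adj))
    fun _ _ h => Subgraph.ext (congrArg Prod.fst h) (congrArg Prod.snd h)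

lemma exists_path_length_dist {α : Type*} {T : SimpleGraph α} (hconn : T.Connected)
    (u v : α) : ∃ p : T.Walk u v, p.IsPath ∧ p.length = T.dist u v := by
  classical
  obtain ⟨w, hw⟩ := hconn.exists_walk_length_eq_dist u v
  exact ⟨w.bypass, w.bypass_isPath,
    le_antisymm (le_trans w.length_bypass_le hw.le) (dist_le _)⟩

lemma dist_adj_succ {α : Type*} {T : SimpleGraph α} (hconn : T.Connected) {z u c : α}
    (h : T.Adj u c) (hlt : T.dist z u < T.dist z c) : T.dist z c = T.dist z u + 1 := by
  have h1 : T.dist z c ≤ T.dist z u + T.dist u c := hconn.dist_triangle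
  have h2 : T.dist u c ≤ 1 := by
    simpa using dist_le (Walk.cons h Walk.nil)
  omega

lemma adj_dist_ne {α : Type*} {T : SimpleGraph α} (hT : T.IsTree) (z : α) {c y : α}
    (h : T.Adj c y) : T.dist z c ≠ T.dist z y := by
  classical
  intro heq
  have hconn := hT.isConnected
  obtain ⟨p, hp, hpl⟩ := exists_path_length_dist hconn c z
  obtain ⟨q, hq, hql⟩ := exists_path_length_dist hconn y z
  have hcq : c ∉ q.support := by
    intro hc
    have hsum : (q.takeUntil c hc).length + (q.dropUntil c hc).length = q.length := by
      have h0 := congrArg Walk.length (q.take_spec hc)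
      rwa [Walk.length_append] at h0
    have h3 : T.dist c z ≤ (q.dropUntil c hc).length := dist_le _
    have h4 : T.dist y c ≤ (q.takeUntil c hc).length := dist_le _
    have h5 : 0 < T.dist y c := hconn.pos_dist_of_ne h.ne'
    have hcz : T.dist c z = T.dist z c := SimpleGraph.dist_comm
    have hyz : T.dist y z = T.dist z y := SimpleGraph.dist_comm
    omega
  have hP : (Walk.cons h q).IsPath := (Walk.cons_isPath_iff _ _).mpr ⟨hq, hcq⟩
  have := (hT.existsUnique_path c z).unique hp hP
  have hlen := congrArg Walk.length this
  rw [hpl, Walk.length_cons, hql] at hlen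
  have h6 : T.dist c z = T.dist z c := SimpleGraph.dist_comm
  have h7 : T.dist y z = T.dist z y := SimpleGraph.dist_comm
  omega

lemma parent_unique {α : Type*} {T : SimpleGraph α} (hT : T.IsTree) (z : α) {c u₁ u₂ : α}
    (h₁ : T.Adj c u₁) (h₂ : T.Adj c u₂)
    (hl₁ : T.dist z u₁ < T.dist z c) (hl₂ : T.dist z u₂ < T.dist z c) : u₁ = u₂ := by
  classical
  have hconn := hT.isConnected
  have hd₁ : T.dist z c = T.dist z u₁ + 1 := dist_adj_succ hconn h₁.symm hl₁
  have hd₂ : T.dist z c = T.dist z u₂ + 1 := dist_adj_succ hconn h₂.symm hl₂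
  obtain ⟨p₁, hp₁, hpl₁⟩ := exists_path_length_dist hconn u₁ z
  obtain ⟨p₂, hp₂, hpl₂⟩ := exists_path_length_dist hconn u₂ z
  have hns : ∀ (u : α) (p : T.Walk u z), p.IsPath → p.length = T.dist u z →
      T.dist z u < T.dist z c → c ∉ p.support := by
    intro u p _ hpl hul hc
    have h3 : T.dist c z ≤ (p.dropUntil c hc).length := dist_le _
    have h4 : (p.dropUntil c hc).length ≤ p.length := Walk.length_dropUntil_le p hc
    have hcz : T.dist c z = T.dist z c := SimpleGraph.dist_comm
    have huz : T.dist u z = T.dist z u := SimpleGraph.dist_comm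
    omega
  have hP₁ : (Walk.cons h₁ p₁).IsPath :=
    (Walk.cons_isPath_iff _ _).mpr ⟨hp₁, hns u₁ p₁ hp₁ hpl₁ hl₁⟩
  have hP₂ : (Walk.cons h₂ p₂).IsPath :=
    (Walk.cons_isPath_iff _ _).mpr ⟨hp₂, hns u₂ p₂ hp₂ hpl₂ hl₂⟩
  have heq := (hT.existsUnique_path c z).unique hP₁ hP₂
  have := congrArg (fun w : T.Walk c z => w.getVert 1) heq
  simpa [Walk.getVert_cons_succ] using this

lemma dist_le_treeHeight {α : Type*} [Finite α] (T : SimpleGraph α) (z v : α) :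
    T.dist z v ≤ treeHeight T z :=
  le_csSup ((Set.finite_range (T.dist z)).bddAbove) ⟨v, rfl⟩

lemma bootStep_adj_of_copy {α β : Type*} [Finite β] {T : SimpleGraph α} {G : SimpleGraph β}
    {ψ : α → β} (hinj : Function.Injective ψ) {a b : β}
    (hhom : ∀ x y, T.Adj x y → (G ⊔ fromEdgeSet {s(a, b)}).Adj (ψ x) (ψ y))
    {x₀ y₀ : α} (he : T.Adj x₀ y₀) (hx : ψ x₀ = a) (hy : ψ y₀ = b) :
    (bootStep T G).Adj a b := by
  have hab : a ≠ b := by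
    rintro rfl
    exact he.ne (hinj (hx.trans hy.symm))
  rw [bootStep, sup_adj]
  by_cases hG : G.Adj a b
  · exact Or.inl hG
  refine Or.inr ((fromRel_adj _ a b).mpr ⟨hab, Or.inl ?_⟩)
  set G' := G ⊔ fromEdgeSet {s(a, b)} with hG'
  let F : G.Subgraph → G'.Subgraph := fun A =>
    { verts := A.verts
      Adj := A.Adj
      adj_sub := fun h => (sup_adj _ _ _ _).mpr (Or.inl (A.adj_sub h))
      edge_vert := A.edge_vert
      symm := A.symm }
  have hFinj : Function.Injective F := by
    intro A B h
    have h1 := congrArg Subgraph.verts h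
    have h2 := congrArg Subgraph.Adj h
    exact Subgraph.ext h1 h2
  let K : G'.Subgraph :=
    { verts := Set.range ψ
      Adj := fun x y => ∃ p q, T.Adj p q ∧ ψ p = x ∧ ψ q = y
      adj_sub := by rintro v w ⟨p, q, h, rfl, rfl⟩; exact hhom p q h
      edge_vert := by rintro v w ⟨p, q, h, rfl, rfl⟩; exact ⟨p, rfl⟩
      symm := ⟨by rintro v w ⟨p, q, h, rfl, rfl⟩; exact ⟨q, p, h.symm, rfl, rfl⟩⟩ }
  have hKiso : Nonempty (K.coe ≃g T) := by
    refine ⟨RelIso.symm ⟨Equiv.ofInjective ψ hinj, ?_⟩⟩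
    intro p q
    constructor
    · rintro ⟨p', q', h, hp, hq⟩
      change ψ p' = ψ p at hp
      change ψ q' = ψ q at hq
      rw [show p' = p from hinj hp, show q' = q from hinj hq] at h
      exact h
    · intro h
      exact ⟨p, q, h, rfl, rfl⟩
  have hKadj : K.Adj a b := ⟨x₀, y₀, he, hx, hy⟩
  -- sets
  have hsub : F '' {A : G.Subgraph | Nonempty (A.coe ≃g T)} ⊆
      {A : G'.Subgraph | Nonempty (A.coe ≃g T)} := by
    rintro _ ⟨A, hA, rfl⟩
    obtain ⟨iso⟩ := hA
    exact ⟨(Iso.refl.symm.trans iso : (F A).coe ≃g T)⟩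
  have hKmem : K ∈ {A : G'.Subgraph | Nonempty (A.coe ≃g T)} := hKiso
  have hKnot : K ∉ F '' {A : G.Subgraph | Nonempty (A.coe ≃g T)} := by
    rintro ⟨A, _, hFA⟩
    have : (F A).Adj a b := hFA ▸ hKadj
    exact hG (A.adj_sub this)
  have hfin : Finite G'.Subgraph := subgraph_finite G'
  have hlt : (F '' {A : G.Subgraph | Nonempty (A.coe ≃g T)}).ncard <
      {A : G'.Subgraph | Nonempty (A.coe ≃g T)}.ncard := by
    refine Set.ncard_lt_ncard ?_ (Set.toFinite _)
    exact (Set.ssubset_iff_of_subset hsub).mpr ⟨K, hKmem, hKnot⟩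
  calc numCopies T G = (F '' {A : G.Subgraph | Nonempty (A.coe ≃g T)}).ncard :=
        (Set.ncard_image_of_injective _ hFinj).symm
    _ < _ := hlt

open SimpleGraph

/-- Let `T` be a tree rooted at a non-leaf `z` and let `U` be a
minimum vertex cover of `T` containing no leaf such that `v ∈ U` iff `v` has a child
outside `U`. If `φ` embeds `T` as a subgraph `T₀` of `G_{i₀}` in a `T`-bootstrap
process, then at time `i₀ + ⌈height_z(T)/2⌉` every vertex of `φ(U)` is adjacent to
every vertex outside `V(T₀)`. -/
theorem cover_image_almost_universal {α V : Type} [Fintype α] [Fintype V]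
    (T : SimpleGraph α) (hT : T.IsTree) (z : α) (hz : (T.neighborSet z).ncard ≠ 1)
    (U : Set α)
    (hcover : ∀ u v : α, T.Adj u v → u ∈ U ∨ v ∈ U)
    (hmincover : ∀ W : Set α, (∀ u v : α, T.Adj u v → u ∈ W ∨ v ∈ W) → U.ncard ≤ W.ncard)
    (hnoleaf : ∀ u ∈ U, (T.neighborSet u).ncard ≠ 1)
    (hchild : ∀ v : α, v ∈ U ↔ ∃ w : α, T.Adj v w ∧ T.dist z v < T.dist z w ∧ w ∉ U)
    (G : SimpleGraph V) (i₀ : ℕ) (φ : α → V)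
    (hφinj : Function.Injective φ)
    (hφhom : ∀ u v : α, T.Adj u v → (bootProcess T G i₀).Adj (φ u) (φ v)) :
    ∀ u ∈ U, ∀ w : V, w ∉ Set.range φ →
      (bootProcess T G (i₀ + (treeHeight T z + 1) / 2)).Adj (φ u) w := by
  classical
  have hconn := hT.isConnected
  have key : ∀ n : ℕ, ∀ u c : α, T.Adj u c → T.dist z u < T.dist z c → c ∉ U →
      T.dist z c + n = treeHeight T z →
      ∀ w : V, w ∉ Set.range φ → (bootProcess T G (i₀ + 1 + n / 2)).Adj (φ u) w := by
    intro n
    induction n using Nat.strong_induction_on with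
    | _ n IH =>
      intro u c huc hltc hcU hn w hw
      have hucne : u ≠ c := huc.ne
      set ψ : α → V := fun x => if x = c then w else φ x with hψdef
      have hψc : ψ c = w := if_pos rfl
      have hψne : ∀ x, x ≠ c → ψ x = φ x := fun x hx => if_neg hx
      have hψinj : Function.Injective ψ := by
        intro x y hxy
        by_cases hx : x = c <;> by_cases hy : y = c
        · rw [hx, hy]
        · rw [hx, hψc, hψne y hy] at hxy
          exact absurd ⟨y, hxy.symm⟩ hw
        · rw [hy, hψc, hψne x hx] at hxy
          exact absurd ⟨x, hxy⟩ hw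
        · rw [hψne x hx, hψne y hy] at hxy
          exact hφinj hxy
      set G' := bootProcess T G (i₀ + n / 2) with hG'def
      have hcase : ∀ y : α, T.Adj c y →
          (G' ⊔ fromEdgeSet {s(φ u, w)}).Adj w (ψ y) := by
        intro y hcy
        have hyne : y ≠ c := hcy.ne'
        rcases lt_trichotomy (T.dist z y) (T.dist z c) with hlt | heq | hgt
        · have hyu : y = u := parent_unique hT z hcy huc.symm hlt hltc
          subst hyu
          rw [hψne y hyne]
          refine (sup_adj _ _ _ _).mpr (Or.inr ?_)
          rw [fromEdgeSet_adj]
          constructor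
          · rw [Sym2.eq_swap]
            exact Set.mem_singleton _
          · intro hwy
            exact hw ⟨y, hwy.symm⟩
        · exact absurd heq.symm (adj_dist_ne hT z hcy)
        · have hyU : y ∈ U := by
            by_contra hyU
            exact hcU ((hchild c).mpr ⟨y, hcy, hgt, hyU⟩)
          obtain ⟨cy, hycy, hltcy, hcyU⟩ := (hchild y).mp hyU
          have hdy : T.dist z y = T.dist z c + 1 := dist_adj_succ hconn hcy hgt
          have hdcy : T.dist z cy = T.dist z c + 2 := by
            rw [dist_adj_succ hconn hycy hltcy, hdy]
          have hcyH : T.dist z cy ≤ treeHeight T z := dist_le_treeHeight T z cy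
          have hn2 : 2 ≤ n := by omega
          have hIH := IH (n - 2) (by omega) y cy hycy hltcy hcyU (by omega) w hw
          have hle : i₀ + 1 + (n - 2) / 2 ≤ i₀ + n / 2 := by omega
          have hadj := bootProcess_mono T G hle hIH
          rw [hψne y hyne]
          exact (sup_adj _ _ _ _).mpr (Or.inl hadj.symm)
      have hψhom : ∀ x y, T.Adj x y →
          (G' ⊔ fromEdgeSet {s(φ u, w)}).Adj (ψ x) (ψ y) := by
        intro x y hxy
        by_cases hx : x = c
        · subst hx
          rw [hψc]
          exact hcase y hxy
        · by_cases hy : y = c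
          · subst hy
            rw [hψc]
            exact (hcase x hxy.symm).symm
          · rw [hψne x hx, hψne y hy]
            have := hφhom x y hxy
            exact (sup_adj _ _ _ _).mpr
              (Or.inl (bootProcess_mono T G (Nat.le_add_right _ _) this))
      have hstep := bootStep_adj_of_copy hψinj hψhom huc (hψne u hucne) hψc
      have heq : bootProcess T G (i₀ + n / 2 + 1) = bootStep T G' := rfl
      have hfinal : (bootProcess T G (i₀ + n / 2 + 1)).Adj (φ u) w := by
        rw [heq]; exact hstep
      have : i₀ + 1 + n / 2 = i₀ + n / 2 + 1 := by omega
      rwa [this]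
  intro u hu w hw
  obtain ⟨c, huc, hlt, hcU⟩ := (hchild u).mp hu
  have hcH : T.dist z c ≤ treeHeight T z := dist_le_treeHeight T z c
  have h1 : 1 ≤ T.dist z c := by omega
  have hn : T.dist z c + (treeHeight T z - T.dist z c) = treeHeight T z := by omega
  have hkey := key (treeHeight T z - T.dist z c) u c huc hlt hcU hn w hw
  exact bootProcess_mono T G (by omega) hkey
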